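/- arXiv:2009.11841 — 5 statements merged into one kernel-verified Lean document; each statement's English description precedes it below -/
import Mathlib

section
/- Let D be a discrete distribution supported on values z_1 < z_2 < ... < z_k with probability mass f, survival function S(x) = Pr[V ≥ x], and virtual value φ(z_k) = z_k and φ(z_ℓ) = z_ℓ - (z_{ℓ+1} - z_ℓ) · S(z_{ℓ+1})/f(z_ℓ) for ℓ < k. Let r be the smallest value in the support maximizing r·S(r). Then φ(r) ≥ 0. -/
open Finset

/-- Survival function `S(z_i) = Pr[V ≥ z_i]` of a discrete distribution with
support indexed by `Fin k` and mass function `f`. -/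
noncomputable def surv {k : ℕ} (f : Fin k → ℝ) (i : Fin k) : ℝ :=
  ∑ j ∈ Finset.univ.filter (fun j => i ≤ j), f j

/-- Myerson virtual value of a discrete distribution with support `z` and mass `f`:
`φ(z_k) = z_k` and `φ(z_ℓ) = z_ℓ - (z_{ℓ+1} - z_ℓ) · S(z_{ℓ+1}) / f(z_ℓ)` for `ℓ < k`. -/
noncomputable def vv {k : ℕ} (z f : Fin k → ℝ) (i : Fin k) : ℝ :=
  if h : i.1 + 1 < k then
    z i - (z ⟨i.1 + 1, h⟩ - z i) * surv f ⟨i.1 + 1, h⟩ / f i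
  else z i

lemma surv_succ {k : ℕ} (f : Fin k → ℝ) (i : Fin k) (h : i.1 + 1 < k) :
    surv f i = f i + surv f ⟨i.1 + 1, h⟩ := by
  unfold surv
  have hset : Finset.univ.filter (fun j => i ≤ j)
      = insert i (Finset.univ.filter (fun j => (⟨i.1 + 1, h⟩ : Fin k) ≤ j)) := by
    ext j
    simp only [Finset.mem_filter, Finset.mem_insert, Finset.mem_univ, true_and,
      Fin.le_def, Fin.ext_iff]
    omega
  rw [hset, Finset.sum_insert]
  simp only [Finset.mem_filter, Fin.le_def]
  omega

lemma surv_nonneg {k : ℕ} (f : Fin k → ℝ) (hf : ∀ i, 0 < f i) (i : Fin k) :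
    0 ≤ surv f i :=
  Finset.sum_nonneg fun j _ => (hf j).le

/-- If `r` is the smallest support point maximizing the revenue `r·S(r)`,
then the virtual value at `r` is nonnegative. -/
theorem stmt0 (k : ℕ) (hk : 0 < k) (z f : Fin k → ℝ)
    (hz : StrictMono z) (hzpos : ∀ i, 0 < z i)
    (hf : ∀ i, 0 < f i) (hsum : ∑ i, f i = 1)
    (r : Fin k)
    (hrmax : ∀ i, z i * surv f i ≤ z r * surv f r)
    (hrmin : ∀ i, z i * surv f i = z r * surv f r → r ≤ i) :
    0 ≤ vv z f r := by
  unfold vv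
  split
  · rename_i h
    set r' : Fin k := ⟨r.1 + 1, h⟩
    have key : z r' * surv f r' ≤ z r * surv f r := hrmax r'
    rw [surv_succ f r h] at key
    have hS : 0 ≤ surv f r' := surv_nonneg f hf r'
    have hfr : 0 < f r := hf r
    rw [sub_nonneg, div_le_iff₀ hfr]
    nlinarith
  · exact (hzpos r).le
end

section
/- Let D be a discrete regular distribution (virtual values non-decreasing) with reserve price r. Then for every v in the support of D with v < r, the virtual value satisfies φ(v) < 0. -/
open Finset

lemma telescope {k : ℕ} (z f : Fin k → ℝ) (i : Fin k) (h : i.1 + 1 < k)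
    (hf : 0 < f i) :
    f i * vv z f i = z i * surv f i - z ⟨i.1 + 1, h⟩ * surv f ⟨i.1 + 1, h⟩ := by
  rw [vv, dif_pos h, surv_succ f i h]
  field_simp
  ring

/-- For a discrete regular distribution (non-decreasing virtual values) with
reserve price `r` (smallest support point maximizing `r·S(r)`), every support
value `v < r` has strictly negative virtual value. -/
theorem stmt1 (k : ℕ) (hk : 0 < k) (z f : Fin k → ℝ)
    (hz : StrictMono z) (hzpos : ∀ i, 0 < z i)
    (hf : ∀ i, 0 < f i) (hsum : ∑ i, f i = 1)
    (hreg : Monotone (vv z f))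
    (r : Fin k)
    (hrmax : ∀ i, z i * surv f i ≤ z r * surv f r)
    (hrmin : ∀ i, z i * surv f i = z r * surv f r → r ≤ i) :
    ∀ i : Fin k, z i < z r → vv z f i < 0 := by
  intro i hir
  have hilt : i < r := hz.lt_iff_lt.mp hir
  by_contra hcon
  push_neg at hcon
  -- claim: for any n, i with i.1 + n = r.1 and 0 ≤ vv z f i, g r ≤ g i
  have claim : ∀ n : ℕ, ∀ j : Fin k, j.1 + n = r.1 → 0 ≤ vv z f j →
      z r * surv f r ≤ z j * surv f j := by
    intro n
    induction n with
    | zero =>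
      intro j hj _
      have : j = r := Fin.ext (by omega)
      rw [this]
    | succ n ih =>
      intro j hj hvv
      have hlt : j.1 + 1 < k := by have := r.2; omega
      set j' : Fin k := ⟨j.1 + 1, hlt⟩ with hj'
      have hjj' : j ≤ j' := Fin.le_def.mpr (Nat.le_succ _)
      have hvv' : 0 ≤ vv z f j' := le_trans hvv (hreg hjj')
      have h1 : z r * surv f r ≤ z j' * surv f j' := ih j' (by simp [hj']; omega) hvv'
      have h2 : z j' * surv f j' ≤ z j * surv f j := by
        have := telescope z f j hlt (hf j)
        nlinarith [mul_nonneg (le_of_lt (hf j)) hvv]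
      linarith
  have h1 : z r * surv f r ≤ z i * surv f i :=
    claim (r.1 - i.1) i (by have := Fin.lt_def.mp hilt; omega) hcon
  have h2 : z i * surv f i = z r * surv f r := le_antisymm (hrmax i) h1
  have := hrmin i h2
  exact absurd this (not_le.mpr hilt)
end

section
/- Given n independent Bernoulli random variables X_1, ..., X_n with N = Σ_i X_i, there exists j ∈ {1, ..., n} such that (1/j)·Σ_{i=1}^{j} Pr[N ≥ i] - Pr[N ≥ j+1] ≥ Pr[N ≥ 1]/15. -/
open MeasureTheory ProbabilityTheory Finset

lemma tele6 (j n : ℕ) (h : j ≤ n) :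
    ∑ i ∈ Finset.Ioc j n, (1/((i:ℝ)-1) - 1/(i:ℝ)) = 1/(j:ℝ) - 1/(n:ℝ) := by
  induction n, h using Nat.le_induction with
  | base => simp
  | succ n hn ih =>
      rw [Finset.sum_Ioc_succ_top hn, ih]
      push_cast
      ring

lemma icc_eq_ioc (x : ℕ) : Finset.Icc 1 x = Finset.Ioc 0 x := by
  ext i; simp [Finset.mem_Icc, Finset.mem_Ioc]; omega

section aux
variable {Ω : Type*} [MeasurableSpace Ω] {μ : Measure Ω} [IsProbabilityMeasure μ]
variable {N : Ω → ℝ}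

lemma aux_le (hN : Measurable N) {g : Ω → ℝ} (hg : Integrable g μ) {c : ℝ} (hc : 0 ≤ c)
    (k : ℕ) (h0 : ∀ ω, 0 ≤ g ω) (h : ∀ ω, (k:ℝ) ≤ N ω → c ≤ g ω) :
    c * (μ {ω | (k:ℝ) ≤ N ω}).toReal ≤ ∫ ω, g ω ∂μ := by
  have hs : MeasurableSet {ω | (k:ℝ) ≤ N ω} := measurableSet_le measurable_const hN
  have h1 : ∫ ω, Set.indicator {ω | (k:ℝ) ≤ N ω} (fun _ => c) ω ∂μ ≤ ∫ ω, g ω ∂μ := by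
    refine integral_mono ((integrable_const c).indicator hs) hg (fun ω => ?_)
    by_cases hω : ω ∈ {ω | (k:ℝ) ≤ N ω}
    · rw [Set.indicator_of_mem hω]; exact h ω hω
    · rw [Set.indicator_of_notMem hω]; exact h0 ω
  rwa [integral_indicator_const _ hs, smul_eq_mul, mul_comm] at h1

lemma aux_ge (hN : Measurable N) {g : Ω → ℝ} (hg : Integrable g μ) (k : ℕ)
    (h0 : ∀ ω, N ω < (k:ℝ) → g ω ≤ 0) (h1 : ∀ ω, g ω ≤ 1) :
    ∫ ω, g ω ∂μ ≤ (μ {ω | (k:ℝ) ≤ N ω}).toReal := by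
  have hs : MeasurableSet {ω | (k:ℝ) ≤ N ω} := measurableSet_le measurable_const hN
  have h2 : ∫ ω, g ω ∂μ ≤ ∫ ω, Set.indicator {ω | (k:ℝ) ≤ N ω} (fun _ => (1:ℝ)) ω ∂μ := by
    refine integral_mono hg ((integrable_const 1).indicator hs) (fun ω => ?_)
    by_cases hω : ω ∈ {ω | (k:ℝ) ≤ N ω}
    · rw [Set.indicator_of_mem hω]; exact h1 ω
    · rw [Set.indicator_of_notMem hω]
      exact h0 ω (lt_of_not_ge hω)
  rw [integral_indicator_const _ hs, smul_eq_mul, mul_one] at h2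
  exact h2

end aux

set_option maxHeartbeats 2000000 in
/-- Given `n` independent Bernoulli random variables `X_1, ..., X_n` with sum `N`,
there exists `j ∈ {1, ..., n}` with
`(1/j)·Σ_{i=1}^{j} Pr[N ≥ i] − Pr[N ≥ j+1] ≥ Pr[N ≥ 1]/15`. -/
theorem stmt6 {Ω : Type*} [MeasurableSpace Ω] (μ : Measure Ω) [IsProbabilityMeasure μ]
    (n : ℕ) (hn : 1 ≤ n) (X : Fin n → Ω → ℝ)
    (hmeas : ∀ i, Measurable (X i))
    (hval : ∀ i ω, X i ω = 0 ∨ X i ω = 1)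
    (hindep : iIndepFun X μ) :
    ∃ j ∈ Finset.Icc 1 n,
      (1 / (j : ℝ)) *
          (∑ i ∈ Finset.Icc 1 j, (μ {ω | (i : ℝ) ≤ ∑ t, X t ω}).toReal) -
        (μ {ω | ((j : ℝ) + 1) ≤ ∑ t, X t ω}).toReal ≥
      (μ {ω | (1 : ℝ) ≤ ∑ t, X t ω}).toReal / 15 := by
  classical
  have hNmeas : Measurable (fun ω => ∑ t, X t ω) :=
    Finset.measurable_sum _ (fun i _ => hmeas i)
  have hX01 : ∀ i ω, 0 ≤ X i ω ∧ X i ω ≤ 1 := by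
    intro i ω; rcases hval i ω with h | h <;> simp [h]
  have hXint : ∀ i, Integrable (X i) μ := by
    intro i
    refine (integrable_const (1:ℝ)).mono' (hmeas i).aestronglyMeasurable ?_
    exact Filter.Eventually.of_forall fun ω => by
      rcases hval i ω with h | h <;> simp [h]
  have hNint : Integrable (fun ω => ∑ t, X t ω) μ :=
    integrable_finset_sum _ (fun i _ => hXint i)
  have hNnat : ∀ ω, ∃ k : ℕ, k ≤ n ∧ (∑ t, X t ω) = (k:ℝ) := by
    intro ω
    refine ⟨(Finset.univ.filter (fun t => X t ω = 1)).card, ?_, ?_⟩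
    · exact le_trans (Finset.card_filter_le _ _) (by simp)
    · rw [Finset.card_filter]
      push_cast
      refine Finset.sum_congr rfl (fun t _ => ?_)
      rcases hval t ω with h | h <;> simp [h]
  have hNnonneg : ∀ ω, 0 ≤ ∑ t, X t ω :=
    fun ω => Finset.sum_nonneg (fun t _ => (hX01 t ω).1)
  set m : ℝ := ∫ ω, (∑ t, X t ω) ∂μ with hmdef
  have hm0 : 0 ≤ m := integral_nonneg hNnonneg
  have hgmeas : Measurable (fun ω => (∑ t, X t ω) * ((∑ t, X t ω) - 1)) :=
    hNmeas.mul (hNmeas.sub measurable_const)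
  have hgnonneg : ∀ ω, 0 ≤ (∑ t, X t ω) * ((∑ t, X t ω) - 1) := by
    intro ω
    obtain ⟨k, hkn, hk⟩ := hNnat ω
    rw [hk]
    rcases Nat.eq_zero_or_pos k with h | h
    · simp [h]
    · have h1 : (1:ℝ) ≤ (k:ℝ) := by exact_mod_cast h
      nlinarith
  have hgint : Integrable (fun ω => (∑ t, X t ω) * ((∑ t, X t ω) - 1)) μ := by
    refine (integrable_const ((n:ℝ) * (n:ℝ))).mono' hgmeas.aestronglyMeasurable ?_
    refine Filter.Eventually.of_forall fun ω => ?_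
    obtain ⟨k, hkn, hk⟩ := hNnat ω
    have hg0 := hgnonneg ω
    rw [Real.norm_eq_abs, abs_of_nonneg hg0, hk]
    have h1 : (k:ℝ) ≤ (n:ℝ) := by exact_mod_cast hkn
    nlinarith [(by positivity : (0:ℝ) ≤ (k:ℝ))]
  set E2 : ℝ := ∫ ω, (∑ t, X t ω) * ((∑ t, X t ω) - 1) ∂μ with hE2def
  have hE20 : 0 ≤ E2 := integral_nonneg hgnonneg
  -- E2 ≤ m * m  via independence
  have hprodint : ∀ t s : Fin n, Integrable (fun ω => X t ω * X s ω) μ := by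
    intro t s
    refine (integrable_const (1:ℝ)).mono' ((hmeas t).mul (hmeas s)).aestronglyMeasurable ?_
    refine Filter.Eventually.of_forall fun ω => ?_
    rcases hval t ω with h | h <;> rcases hval s ω with h' | h' <;> simp [h, h']
  have hmq : m = ∑ t, ∫ ω, X t ω ∂μ := by
    rw [hmdef]; exact integral_finset_sum _ (fun t _ => hXint t)
  have hE2le : E2 ≤ m * m := by
    have expand : ∀ ω, (∑ t, X t ω) * ((∑ t, X t ω) - 1)
        = (∑ t, ∑ s, X t ω * X s ω) - ∑ t, X t ω := by
      intro ω; rw [mul_sub, mul_one, Finset.sum_mul_sum]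
    have hinner : ∀ t : Fin n, Integrable (fun ω => ∑ s, X t ω * X s ω) μ :=
      fun t => integrable_finset_sum _ (fun s _ => hprodint t s)
    have h1 : E2 = (∑ t, ∑ s, ∫ ω, X t ω * X s ω ∂μ) - m := by
      rw [hE2def]
      simp only [expand]
      rw [integral_sub (integrable_finset_sum _ (fun t _ => hinner t)) hNint,
        integral_finset_sum _ (fun t _ => hinner t)]
      rw [← hmdef]
      congr 1
      exact Finset.sum_congr rfl fun t _ => integral_finset_sum _ (fun s _ => hprodint t s)
    have hrow : ∀ t : Fin n, ∑ s, ∫ ω, X t ω * X s ω ∂μ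
        = (∫ ω, X t ω ∂μ)
          + ((∑ s, (∫ ω, X t ω ∂μ) * (∫ ω, X s ω ∂μ))
             - (∫ ω, X t ω ∂μ) * (∫ ω, X t ω ∂μ)) := by
      intro t
      rw [← Finset.add_sum_erase _ _ (Finset.mem_univ t)]
      congr 1
      · have hsq : (fun ω => X t ω * X t ω) = X t := by
          funext ω; rcases hval t ω with h | h <;> simp [h]
        rw [hsq]
      · rw [← Finset.sum_erase_eq_sub (Finset.mem_univ t)]
        refine Finset.sum_congr rfl (fun s hs => ?_)
        have hts : t ≠ s := (Finset.ne_of_mem_erase hs).symm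
        exact (hindep.indepFun hts).integral_fun_mul_eq_mul_integral (hXint t).aestronglyMeasurable
          (hXint s).aestronglyMeasurable
    have h2 : ∑ t, ∑ s, ∫ ω, X t ω * X s ω ∂μ
        = m + (m * m - ∑ t, (∫ ω, X t ω ∂μ) * (∫ ω, X t ω ∂μ)) := by
      rw [Finset.sum_congr rfl (fun t _ => hrow t)]
      rw [Finset.sum_add_distrib, Finset.sum_sub_distrib]
      rw [← Finset.sum_mul_sum, ← hmq]
    have hq2 : 0 ≤ ∑ t, (∫ ω, X t ω ∂μ) * (∫ ω, X t ω ∂μ) :=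
      Finset.sum_nonneg fun t _ => mul_self_nonneg _
    linarith [h1, h2]
  -- the tail probabilities
  set P : ℕ → ℝ := fun k => (μ {ω | (k:ℝ) ≤ ∑ t, X t ω}).toReal with hPdef
  have hP0 : ∀ k, 0 ≤ P k := fun k => ENNReal.toReal_nonneg
  have hP1le1 : P 1 ≤ 1 := by
    have h := ENNReal.toReal_mono ENNReal.one_ne_top
      (prob_le_one (μ := μ) (s := {ω | ((1:ℕ):ℝ) ≤ ∑ t, X t ω}))
    simpa [hPdef] using h
  have hmark : ∀ i : ℕ, 2 ≤ i → ((i:ℝ) * ((i:ℝ) - 1)) * P i ≤ E2 := by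
    intro i hi
    have hi1 : (2:ℝ) ≤ (i:ℝ) := by exact_mod_cast hi
    have h := aux_le (c := (i:ℝ)*((i:ℝ)-1)) hNmeas hgint (by nlinarith) i hgnonneg (fun ω hω => by
      nlinarith [mul_nonneg (sub_nonneg.mpr hω)
        (show (0:ℝ) ≤ (∑ t, X t ω) + (i:ℝ) - 1 by linarith)])
    rw [← hE2def] at h
    simpa [hPdef] using h
  have hp1m : P 1 ≤ m := by
    have h := aux_le (c := (1:ℝ)) hNmeas hNint (zero_le_one) 1 hNnonneg (fun ω h => by simpa using h)
    rw [← hmdef] at h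
    simpa [hPdef] using h
  have hp1lb : m - E2 / 2 ≤ P 1 := by
    have hbint : Integrable
        (fun ω => (∑ t, X t ω) - ((∑ t, X t ω) * ((∑ t, X t ω) - 1)) / 2) μ := by
      exact hNint.sub (hgint.div_const 2)
    have h := aux_ge hNmeas hbint 1 ?_ ?_
    · rw [integral_sub hNint (hgint.div_const 2), integral_div, ← hmdef, ← hE2def] at h
      simpa [hPdef] using h
    · intro ω hlt
      obtain ⟨k, hkn, hk⟩ := hNnat ω
      rw [hk] at hlt ⊢
      have hk0 : k = 0 := by
        have : k < 1 := by exact_mod_cast hlt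
        omega
      subst hk0
      norm_num
    · intro ω
      obtain ⟨k, hkn, hk⟩ := hNnat ω
      rw [hk]
      rcases k with _ | _ | k
      · norm_num
      · norm_num
      · push_cast
        nlinarith [(by positivity : (0:ℝ) ≤ (k:ℝ)), sq_nonneg ((k:ℝ))]
  have hsumP : ∑ i ∈ Finset.Icc 1 n, P i = m := by
    have hindint : ∀ k : ℕ,
        Integrable (Set.indicator {ω | (k:ℝ) ≤ ∑ t, X t ω} (fun _ => (1:ℝ))) μ :=
      fun k => (integrable_const 1).indicator (measurableSet_le measurable_const hNmeas)
    have hpt : ∀ ω, ∑ i ∈ Finset.Icc 1 n,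
        Set.indicator {ω | (i:ℝ) ≤ ∑ t, X t ω} (fun _ => (1:ℝ)) ω = ∑ t, X t ω := by
      intro ω
      obtain ⟨k, hkn, hk⟩ := hNnat ω
      have hterm : ∀ i ∈ Finset.Icc 1 n,
          Set.indicator {ω | (i:ℝ) ≤ ∑ t, X t ω} (fun _ => (1:ℝ)) ω
            = if i ≤ k then (1:ℝ) else 0 := by
        intro i _
        by_cases hik : i ≤ k
        · rw [if_pos hik, Set.indicator_of_mem]
          show (i:ℝ) ≤ ∑ t, X t ω
          rw [hk]; exact_mod_cast hik
        · rw [if_neg hik, Set.indicator_of_notMem]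
          show ¬ (i:ℝ) ≤ ∑ t, X t ω
          rw [hk]
          exact_mod_cast hik
      rw [Finset.sum_congr rfl hterm, Finset.sum_boole]
      have hfilter : (Finset.Icc 1 n).filter (fun i => i ≤ k) = Finset.Icc 1 k := by
        ext i; simp only [Finset.mem_filter, Finset.mem_Icc]; omega
      rw [hfilter, hk]
      simp [Nat.card_Icc]
    calc ∑ i ∈ Finset.Icc 1 n, P i
        = ∑ i ∈ Finset.Icc 1 n,
            ∫ ω, Set.indicator {ω | (i:ℝ) ≤ ∑ t, X t ω} (fun _ => (1:ℝ)) ω ∂μ := by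
          refine Finset.sum_congr rfl fun i _ => ?_
          have hs : MeasurableSet {ω | (i:ℝ) ≤ ∑ t, X t ω} :=
            measurableSet_le measurable_const hNmeas
          rw [integral_indicator_const (1:ℝ) hs, smul_eq_mul, mul_one]
          rfl
      _ = ∫ ω, ∑ i ∈ Finset.Icc 1 n,
            Set.indicator {ω | (i:ℝ) ≤ ∑ t, X t ω} (fun _ => (1:ℝ)) ω ∂μ :=
          (integral_finset_sum _ (fun i _ => hindint i)).symm
      _ = m := by
          rw [hmdef]
          exact integral_congr_ae (Filter.Eventually.of_forall hpt)
  have hpn1 : P (n+1) = 0 := by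
    have hempty : {ω | ((n+1 : ℕ):ℝ) ≤ ∑ t, X t ω} = ∅ := by
      ext ω
      simp only [Set.mem_setOf_eq, Set.mem_empty_iff_false, iff_false, not_le]
      obtain ⟨k, hkn, hk⟩ := hNnat ω
      rw [hk]
      exact_mod_cast Nat.lt_succ_of_le hkn
    simp only [hPdef, hempty]
    simp
  clear_value m E2 P
  -- reduce to statement about P
  suffices h : ∃ j ∈ Finset.Icc 1 n,
      1 / (j:ℝ) * (∑ i ∈ Finset.Icc 1 j, P i) - P (j+1) ≥ P 1 / 15 by
    obtain ⟨j, hj, hineq⟩ := h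
    refine ⟨j, hj, ?_⟩
    simp only [hPdef] at hineq ⊢
    push_cast at hineq ⊢
    exact hineq
  rcases lt_or_ge m (2/7) with hcase | hcase
  · -- j = 1
    refine ⟨1, Finset.mem_Icc.mpr ⟨le_refl 1, hn⟩, ?_⟩
    have hp2 := hmark 2 (le_refl 2)
    norm_num at hp2
    rw [Finset.Icc_self, Finset.sum_singleton, ge_iff_le]
    simp only [Nat.cast_one]
    nlinarith [hp1lb, hp2, hE2le, hP0 2, hP0 1,
      mul_nonneg hm0 (by linarith : (0:ℝ) ≤ 2/7 - m)]
  rcases le_or_gt (n:ℝ) (4*m) with hcase2 | hcase2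
  · -- j = n
    refine ⟨n, Finset.mem_Icc.mpr ⟨hn, le_refl n⟩, ?_⟩
    have hn0 : (0:ℝ) < n := by exact_mod_cast hn
    rw [ge_iff_le, hsumP, hpn1, sub_zero]
    have h1 : P 1 / 15 ≤ m / (n:ℝ) := by
      rw [div_le_div_iff₀ (by norm_num) hn0]
      nlinarith [mul_le_mul_of_nonneg_right hP1le1 hn0.le]
    calc P 1 / 15 ≤ m / (n:ℝ) := h1
      _ = 1/(n:ℝ) * m := by ring
  · -- j = ⌈4m⌉₊
    set j : ℕ := ⌈(4:ℝ)*m⌉₊ with hjdef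
    have hjpos : 0 < j := by
      rw [hjdef]; exact Nat.ceil_pos.mpr (by linarith)
    have hjn : j ≤ n := by
      rw [hjdef]; exact Nat.ceil_le.mpr (le_of_lt hcase2)
    have hJ1 : 4*m ≤ (j:ℝ) := by rw [hjdef]; exact Nat.le_ceil _
    have hJ2 : (j:ℝ) ≤ 4*m + 1 := by
      have := Nat.ceil_lt_add_one (by positivity : (0:ℝ) ≤ 4*m)
      rw [hjdef]
      linarith
    have hJ0 : (0:ℝ) < (j:ℝ) := by exact_mod_cast hjpos
    clear_value j
    refine ⟨j, Finset.mem_Icc.mpr ⟨hjpos, hjn⟩, ?_⟩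
    have hsplit : (∑ i ∈ Finset.Icc 1 j, P i) + (∑ i ∈ Finset.Ioc j n, P i) = m := by
      rw [icc_eq_ioc j, Finset.sum_Ioc_consecutive _ (Nat.zero_le j) hjn,
        ← icc_eq_ioc n, hsumP]
    set T : ℝ := ∑ i ∈ Finset.Ioc j n, P i with hTdef
    have hT0 : 0 ≤ T := Finset.sum_nonneg fun i _ => hP0 i
    have hTub : T ≤ E2 * (1/(j:ℝ) - 1/(n:ℝ)) := by
      rw [hTdef]
      calc ∑ i ∈ Finset.Ioc j n, P i
          ≤ ∑ i ∈ Finset.Ioc j n, E2 * (1/((i:ℝ)-1) - 1/(i:ℝ)) := by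
            refine Finset.sum_le_sum fun i hi => ?_
            have hi2 : 2 ≤ i := by
              have := (Finset.mem_Ioc.mp hi).1; omega
            have hiR : (2:ℝ) ≤ (i:ℝ) := by exact_mod_cast hi2
            have hX2 : (0:ℝ) < (i:ℝ) * ((i:ℝ)-1) := by nlinarith
            have heq : 1/((i:ℝ)-1) - 1/(i:ℝ) = 1/((i:ℝ)*((i:ℝ)-1)) := by
              have h1 : (i:ℝ) ≠ 0 := by linarith
              have h2 : (i:ℝ) - 1 ≠ 0 := by
                intro h; rw [sub_eq_zero] at h; rw [h] at hiR; linarith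
              field_simp
              ring
            rw [heq, mul_one_div, le_div_iff₀ hX2, mul_comm]
            exact hmark i hi2
        _ = E2 * ∑ i ∈ Finset.Ioc j n, (1/((i:ℝ)-1) - 1/(i:ℝ)) := (Finset.mul_sum _ _ _).symm
        _ = E2 * (1/(j:ℝ) - 1/(n:ℝ)) := by rw [tele6 j n hjn]
    have hTE : T * (j:ℝ) ≤ E2 := by
      have h1 : T ≤ E2 * (1/(j:ℝ)) := by
        have h2 : E2 * (1/(j:ℝ) - 1/(n:ℝ)) ≤ E2 * (1/(j:ℝ)) := by
          refine mul_le_mul_of_nonneg_left ?_ hE20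
          have : (0:ℝ) ≤ 1/(n:ℝ) := by positivity
          linarith
        linarith
      rw [mul_one_div] at h1
      exact (le_div_iff₀ hJ0).mp h1
    clear_value T
    have hpj1 := hmark (j+1) (by omega)
    push_cast at hpj1
    have hSm : ∑ i ∈ Finset.Icc 1 j, P i = m - T := by
      rw [hTdef] at hsplit ⊢
      linarith
    rw [ge_iff_le, hSm]
    have key : (P 1 / 15 + P (j+1)) * (j:ℝ) ≤ m - T := by
      have hC : (0:ℝ) ≤ P (j+1) * (j:ℝ) := mul_nonneg (hP0 (j+1)) hJ0.le
      have hH : (0:ℝ) ≤ m * (j:ℝ) := mul_nonneg hm0 hJ0.le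
      have hF : (0:ℝ) ≤ m * ((j:ℝ) - 4*m) := mul_nonneg hm0 (by linarith)
      have keysq : (P 1 / 15 + P (j+1)) * (j:ℝ) * (j:ℝ) ≤ (m - T) * (j:ℝ) := by
        rcases le_or_gt m 1 with hm1 | hm1
        · have hE : (0:ℝ) ≤ m * (j:ℝ) * (15/2 - (j:ℝ)) :=
            mul_nonneg hH (by linarith)
          have hG : P 1 * ((j:ℝ) * (j:ℝ)) ≤ m * ((j:ℝ) * (j:ℝ)) :=
            mul_le_mul_of_nonneg_right hp1m (mul_nonneg hJ0.le hJ0.le)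
          nlinarith [hTE, hpj1, hE2le, hC, hE, hG, hF]
        · have hE : (0:ℝ) ≤ ((j:ℝ) - 4*m) * (5*m - (j:ℝ)) :=
            mul_nonneg (by linarith) (by linarith)
          have hG : P 1 * ((j:ℝ) * (j:ℝ)) ≤ 1 * ((j:ℝ) * (j:ℝ)) :=
            mul_le_mul_of_nonneg_right hP1le1 (mul_nonneg hJ0.le hJ0.le)
          nlinarith [hTE, hpj1, hE2le, hC, hE, hG, hF, hH]
      exact le_of_mul_le_mul_right keysq hJ0
    have key2 : P 1 / 15 + P (j+1) ≤ (m - T) / (j:ℝ) := (le_div_iff₀ hJ0).mpr key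
    have hdiv : 1/(j:ℝ) * (m - T) = (m - T) / (j:ℝ) := by ring
    linarith [key2, hdiv.le, hdiv.ge]
end

section
/- If X_1, ..., X_n are independent {0,1}-valued random variables and N = Σ_i X_i, then for any positive integer i, Pr[N ≥ 2i] ≤ Pr[N ≥ i]^2. -/
open MeasureTheory ProbabilityTheory Finset

/-- If `X_1, ..., X_n` are independent `{0,1}`-valued random variables with sum `N`,
then for any positive integer `i`, `Pr[N ≥ 2i] ≤ Pr[N ≥ i]^2`. -/
theorem stmt7 {Ω : Type*} [MeasurableSpace Ω] (μ : Measure Ω) [IsProbabilityMeasure μ]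
    (n : ℕ) (X : Fin n → Ω → ℝ)
    (hmeas : ∀ i, Measurable (X i))
    (hval : ∀ i ω, X i ω = 0 ∨ X i ω = 1)
    (hindep : iIndepFun X μ)
    (i : ℕ) (hi : 1 ≤ i) :
    (μ {ω | ((2 * i : ℕ) : ℝ) ≤ ∑ t, X t ω}).toReal ≤
      (μ {ω | ((i : ℕ) : ℝ) ≤ ∑ t, X t ω}).toReal ^ 2 := by
  classical
  -- Nat-valued versions of the variables
  set Y : Fin n → Ω → ℕ := fun t ω => if X t ω = 0 then 0 else 1 with hYdef
  have hYval : ∀ t ω, (Y t ω : ℝ) = X t ω := by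
    intro t ω; rcases hval t ω with h | h <;> simp [hYdef, h]
  have hYmeas : ∀ t, Measurable (Y t) := fun t =>
    Measurable.ite ((hmeas t) (measurableSet_singleton 0)) measurable_const measurable_const
  have hYle : ∀ t ω, Y t ω ≤ 1 := by
    intro t ω; simp only [hYdef]; split <;> omega
  have hYindep : iIndepFun Y μ := by
    have := hindep.comp (fun _ (x : ℝ) => if x = 0 then (0:ℕ) else 1)
      (fun _ => Measurable.ite (measurableSet_singleton 0) measurable_const measurable_const)
    exact this
  -- partial sums
  set Z : Finset (Fin n) → Ω → ℕ := fun s ω => ∑ t ∈ s, Y t ω with hZdef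
  have hZmeas : ∀ s, Measurable (Z s) := fun s =>
    Finset.measurable_sum _ (fun t _ => hYmeas t)
  set P : ℕ → Finset (Fin n) := fun k => univ.filter (fun t => (t : ℕ) < k) with hPdef
  set Q : ℕ → Finset (Fin n) := fun k => univ.filter (fun t => ¬ (t : ℕ) < k) with hQdef
  have hP0 : P 0 = ∅ := by ext t; simp [hPdef]
  have hPn : P n = univ := by ext t; simp [hPdef, t.isLt]
  have hPQdisj : ∀ k, Disjoint (P k) (Q k) := fun k =>
    disjoint_filter_filter_not univ univ _
  have hZsplit : ∀ k ω, Z (P k) ω + Z (Q k) ω = Z univ ω := by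
    intro k ω
    exact Finset.sum_filter_add_sum_filter_not univ _ _
  have hZmono : ∀ {j k : ℕ} (h : j ≤ k) (ω : Ω), Z (P j) ω ≤ Z (P k) ω := by
    intro j k h ω
    apply Finset.sum_le_sum_of_subset
    intro t ht
    simp only [hPdef, mem_filter, mem_univ, true_and] at ht ⊢
    omega
  have hZuniv : ∀ s ω, Z s ω ≤ Z univ ω := by
    intro s ω
    exact Finset.sum_le_sum_of_subset (subset_univ s)
  -- rewrite the statement sets
  have hsum : ∀ ω, ∑ t, X t ω = (Z univ ω : ℝ) := by
    intro ω
    rw [hZdef, Nat.cast_sum]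
    exact Finset.sum_congr rfl fun t _ => (hYval t ω).symm
  have hset : ∀ m : ℕ, {ω | ((m : ℕ) : ℝ) ≤ ∑ t, X t ω} = {ω | m ≤ Z univ ω} := by
    intro m; ext ω; simp [hsum ω, Nat.cast_le]
  -- events
  set A : ℕ → Set Ω := fun k => {ω | i ≤ Z (P (k+1)) ω ∧ Z (P k) ω < i} with hAdef
  set T : ℕ → Set Ω := fun k => {ω | i ≤ Z (Q (k+1)) ω} with hTdef
  have hAmeas : ∀ k, MeasurableSet (A k) := by
    intro k
    have h1 : MeasurableSet {ω | i ≤ Z (P (k+1)) ω} := hZmeas _ measurableSet_Ici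
    have h2 : MeasurableSet {ω | Z (P k) ω < i} := hZmeas _ measurableSet_Iio
    exact h1.inter h2
  -- the events A k are pairwise disjoint
  have hAdisj' : ∀ j k, j < k → Disjoint (A j) (A k) := by
    intro j k hjk
    rw [Set.disjoint_left]
    rintro ω ⟨hj1, _⟩ ⟨_, hk2⟩
    have := hZmono (show j + 1 ≤ k by omega) ω
    omega
  -- coverage: the union of the A k is the event {i ≤ N}
  have hcoverA : ∀ ω, i ≤ Z univ ω → ∃ k < n, ω ∈ A k := by
    intro ω hω
    have hn : i ≤ Z (P n) ω := by rwa [hPn]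
    have hex : ∃ m, i ≤ Z (P m) ω := ⟨n, hn⟩
    set m := Nat.find hex with hm
    have hspec : i ≤ Z (P m) ω := Nat.find_spec hex
    have hmn : m ≤ n := Nat.find_min' hex hn
    have hm0 : m ≠ 0 := by
      intro h
      rw [h, hP0] at hspec
      simp [hZdef] at hspec
      omega
    refine ⟨m - 1, by omega, ?_, ?_⟩
    · have : m - 1 + 1 = m := by omega
      rw [this]; exact hspec
    · have := Nat.find_min hex (show m - 1 < m by omega)
      omega
  have hcover : {ω | i ≤ Z univ ω} = ⋃ k ∈ Finset.range n, A k := by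
    ext ω
    simp only [Set.mem_setOf_eq, Set.mem_iUnion, Finset.mem_range, exists_prop]
    constructor
    · intro hω
      obtain ⟨k, hk, hA⟩ := hcoverA ω hω
      exact ⟨k, hk, hA⟩
    · rintro ⟨k, _, hA1, _⟩
      exact le_trans hA1 (hZuniv _ ω)
  -- coverage of the doubled event
  have hcover2 : {ω | 2 * i ≤ Z univ ω} ⊆ ⋃ k ∈ Finset.range n, A k ∩ T k := by
    intro ω hω
    simp only [Set.mem_setOf_eq] at hω
    obtain ⟨k, hk, hA⟩ := hcoverA ω (le_trans (by omega) hω)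
    simp only [Set.mem_iUnion, Finset.mem_range, exists_prop]
    refine ⟨k, hk, hA, ?_⟩
    -- Z (P (k+1)) ≤ i
    have hins : P (k + 1) = insert ⟨k, hk⟩ (P k) := by
      ext t
      simp only [hPdef, mem_filter, mem_univ, true_and, mem_insert, Fin.ext_iff]
      omega
    have hnotmem : (⟨k, hk⟩ : Fin n) ∉ P k := by
      simp [hPdef]
    have hPk1 : Z (P (k+1)) ω = Y ⟨k, hk⟩ ω + Z (P k) ω := by
      rw [hZdef]
      simp only [hins]
      rw [Finset.sum_insert hnotmem]
    have hle : Z (P (k+1)) ω ≤ i := by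
      have := hYle ⟨k, hk⟩ ω
      have := hA.2
      omega
    have hsplit := hZsplit (k+1) ω
    simp only [hTdef, Set.mem_setOf_eq]
    omega
  -- independence: μ (A k ∩ T k) = μ (A k) * μ (T k)
  have hindepAT : ∀ k < n, μ (A k ∩ T k) = μ (A k) * μ (T k) := by
    intro k _
    have hF : IndepFun (fun ω (t : P (k+1)) => Y t ω) (fun ω (t : Q (k+1)) => Y t ω) μ :=
      hYindep.indepFun_finset (P (k+1)) (Q (k+1)) (hPQdisj (k+1)) hYmeas
    set SA : Set ((P (k+1) : Finset (Fin n)) → ℕ) :=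
      {v | i ≤ ∑ t ∈ (P (k+1)).attach, v t ∧
        (∑ t ∈ (P (k+1)).attach, if (t : Fin n) ∈ P k then v t else 0) < i} with hSAdef
    set TA : Set ((Q (k+1) : Finset (Fin n)) → ℕ) :=
      {v | i ≤ ∑ t ∈ (Q (k+1)).attach, v t} with hTAdef
    have hSAmeas : MeasurableSet SA := by
      have h1 : Measurable (fun v : (P (k+1) : Finset (Fin n)) → ℕ =>
          ∑ t ∈ (P (k+1)).attach, v t) :=
        Finset.measurable_sum _ (fun t _ => measurable_pi_apply t)
      have h2 : Measurable (fun v : (P (k+1) : Finset (Fin n)) → ℕ =>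
          ∑ t ∈ (P (k+1)).attach, if (t : Fin n) ∈ P k then v t else 0) := by
        apply Finset.measurable_sum
        intro t _
        by_cases h : (t : Fin n) ∈ P k
        · simpa [h] using measurable_pi_apply t
        · simp [h]
      exact (h1 measurableSet_Ici).inter (h2 measurableSet_Iio)
    have hTAmeas : MeasurableSet TA := by
      have h1 : Measurable (fun v : (Q (k+1) : Finset (Fin n)) → ℕ =>
          ∑ t ∈ (Q (k+1)).attach, v t) :=
        Finset.measurable_sum _ (fun t _ => measurable_pi_apply t)
      exact h1 measurableSet_Ici
    have key := hF.measure_inter_preimage_eq_mul SA TA hSAmeas hTAmeas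
    -- identify the preimages
    have hpre1 : (fun ω (t : P (k+1)) => Y t ω) ⁻¹' SA = A k := by
      ext ω
      simp only [Set.mem_preimage, hSAdef, Set.mem_setOf_eq, hAdef]
      have e1 : (∑ t ∈ (P (k+1)).attach, Y t ω) = Z (P (k+1)) ω := by
        simp only [hZdef]
        exact Finset.sum_attach (P (k+1)) (fun t => Y t ω)
      have e2 : (∑ t ∈ (P (k+1)).attach, if (t : Fin n) ∈ P k then Y t ω else 0)
          = Z (P k) ω := by
        have h := Finset.sum_attach (P (k+1)) (fun t : Fin n => if t ∈ P k then Y t ω else 0)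
        simp only [hZdef]
        rw [h, Finset.sum_ite_mem]
        congr 1
        rw [Finset.inter_eq_right]
        intro t ht
        simp only [hPdef, mem_filter, mem_univ, true_and] at ht ⊢
        omega
      rw [e1, e2]
    have hpre2 : (fun ω (t : Q (k+1)) => Y t ω) ⁻¹' TA = T k := by
      ext ω
      simp only [Set.mem_preimage, hTAdef, Set.mem_setOf_eq, hTdef]
      have h := Finset.sum_attach (Q (k+1)) (fun t : Fin n => Y t ω)
      simp only [hZdef]
      rw [h]
    rw [hpre1, hpre2] at key
    exact key
  -- T k ⊆ {i ≤ N}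
  have hTsub : ∀ k, μ (T k) ≤ μ {ω | i ≤ Z univ ω} := by
    intro k
    apply measure_mono
    intro ω hω
    simp only [hTdef, Set.mem_setOf_eq] at hω ⊢
    exact le_trans hω (hZuniv _ ω)
  -- main chain in ℝ≥0∞
  have main : μ {ω | 2 * i ≤ Z univ ω} ≤ μ {ω | i ≤ Z univ ω} * μ {ω | i ≤ Z univ ω} := by
    calc μ {ω | 2 * i ≤ Z univ ω}
        ≤ μ (⋃ k ∈ Finset.range n, A k ∩ T k) := measure_mono hcover2
      _ ≤ ∑ k ∈ Finset.range n, μ (A k ∩ T k) := measure_biUnion_finset_le _ _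
      _ = ∑ k ∈ Finset.range n, μ (A k) * μ (T k) := by
          apply Finset.sum_congr rfl
          intro k hk
          exact hindepAT k (Finset.mem_range.mp hk)
      _ ≤ ∑ k ∈ Finset.range n, μ (A k) * μ {ω | i ≤ Z univ ω} := by
          apply Finset.sum_le_sum
          intro k _
          exact mul_le_mul_right (hTsub k) _
      _ = (∑ k ∈ Finset.range n, μ (A k)) * μ {ω | i ≤ Z univ ω} := by
          rw [Finset.sum_mul]
      _ = μ (⋃ k ∈ Finset.range n, A k) * μ {ω | i ≤ Z univ ω} := by
          congr 1
          exact (measure_biUnion_finset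
            (fun j hj k hk hjk => by
              rcases lt_or_gt_of_ne hjk with h | h
              · exact hAdisj' j k h
              · exact (hAdisj' k j h).symm)
            (fun k _ => hAmeas k)).symm
      _ = μ {ω | i ≤ Z univ ω} * μ {ω | i ≤ Z univ ω} := by rw [hcover]
  -- conclude
  rw [hset (2 * i), hset i]
  have hne : μ {ω | i ≤ Z univ ω} * μ {ω | i ≤ Z univ ω} ≠ ⊤ :=
    ENNReal.mul_ne_top (measure_ne_top μ _) (measure_ne_top μ _)
  calc (μ {ω | 2 * i ≤ Z univ ω}).toReal
      ≤ (μ {ω | i ≤ Z univ ω} * μ {ω | i ≤ Z univ ω}).toReal := ENNReal.toReal_mono hne main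
    _ = (μ {ω | i ≤ Z univ ω}).toReal ^ 2 := by
        rw [ENNReal.toReal_mul, sq]
end

section
/- Let N be the sum of n independent Bernoulli variables and suppose j ≥ 2 is such that Pr[N ≥ j] ≥ 1/2 and Pr[N ≥ j+1] ≤ 1/2. Then (1/j)·Σ_{i=1}^{j} Pr[N ≥ i] − Pr[N ≥ j+1] ≥ (⌊j/2⌋/j)·(√(1/2) − 1/2) ≥ 1/15, using Pr[N ≥ ⌊j/2⌋] ≥ √(Pr[N ≥ j]) ≥ √(1/2). -/
open MeasureTheory ProbabilityTheory Finset

lemma sum_eq_nat' {Ω : Type*} {n : ℕ} {X : Fin n → Ω → ℝ}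
    (hval : ∀ i ω, X i ω = 0 ∨ X i ω = 1) (s : Finset (Fin n)) (ω : Ω) :
    ∃ m : ℕ, ∑ t ∈ s, X t ω = m := by
  classical
  induction s using Finset.induction with
  | empty => exact ⟨0, by simp⟩
  | @insert a s' h ih =>
    obtain ⟨m, hm⟩ := ih
    rcases hval a ω with h1 | h1
    · exact ⟨m, by rw [Finset.sum_insert h, h1, hm]; ring⟩
    · exact ⟨m + 1, by rw [Finset.sum_insert h, h1, hm]; push_cast; ring⟩

lemma submul' {Ω : Type*} [MeasurableSpace Ω] (μ : Measure Ω) [IsProbabilityMeasure μ]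
    {n : ℕ} {X : Fin n → Ω → ℝ}
    (hmeas : ∀ i, Measurable (X i))
    (hval : ∀ i ω, X i ω = 0 ∨ X i ω = 1)
    (hindep : iIndepFun X μ) (a : ℕ) (ha : 1 ≤ a) :
    μ {ω | ((2 * a : ℕ) : ℝ) ≤ ∑ t, X t ω} ≤
      μ {ω | (a : ℝ) ≤ ∑ t, X t ω} * μ {ω | (a : ℝ) ≤ ∑ t, X t ω} := by
  classical
  have hnonneg : ∀ t ω, 0 ≤ X t ω := fun t ω => by
    rcases hval t ω with h | h <;> simp [h]
  set S : Ω → ℝ := fun ω => ∑ t, X t ω with hSdef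
  set P : ℕ → Ω → ℝ := fun k ω => ∑ t ∈ univ.filter (fun t : Fin n => (t : ℕ) < k), X t ω
    with hPdef
  set Q : ℕ → Ω → ℝ := fun k ω => ∑ t ∈ univ.filter (fun t : Fin n => k ≤ (t : ℕ)), X t ω
    with hQdef
  have hPmeas : ∀ k, Measurable (P k) := fun k =>
    Finset.measurable_sum _ fun t _ => hmeas t
  have hQmeas : ∀ k, Measurable (Q k) := fun k =>
    Finset.measurable_sum _ fun t _ => hmeas t
  have hPQ : ∀ k ω, P k ω + Q k ω = S ω := by
    intro k ω
    rw [hPdef, hQdef, hSdef]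
    simp only
    rw [← Finset.sum_filter_add_sum_filter_not univ (fun t : Fin n => (t : ℕ) < k) (fun t => X t ω)]
    congr 1
    apply Finset.sum_congr _ (fun _ _ => rfl)
    congr 1
    ext t
    omega
  have hPmono : ∀ m k, m ≤ k → ∀ ω, P m ω ≤ P k ω := by
    intro m k hmk ω
    apply Finset.sum_le_sum_of_subset_of_nonneg
    · intro t ht
      simp only [Finset.mem_filter, Finset.mem_univ, true_and] at ht ⊢
      omega
    · exact fun t _ _ => hnonneg t ω
  have hPS : ∀ k ω, P k ω ≤ S ω := by
    intro k ω
    rw [← hPQ k ω]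
    have : 0 ≤ Q k ω := Finset.sum_nonneg fun t _ => hnonneg t ω
    linarith
  have hQS : ∀ k ω, Q k ω ≤ S ω := by
    intro k ω
    rw [← hPQ k ω]
    have : 0 ≤ P k ω := Finset.sum_nonneg fun t _ => hnonneg t ω
    linarith
  have hPn : ∀ ω, P n ω = S ω := by
    intro ω
    rw [hPdef, hSdef]
    simp only
    apply Finset.sum_congr _ (fun _ _ => rfl)
    simp [Finset.filter_true_of_mem, Fin.is_lt]
  have hP0 : ∀ ω, P 0 ω = 0 := by
    intro ω; rw [hPdef]; simp
  have hPnat : ∀ k ω, ∃ m : ℕ, P k ω = m := fun k ω => sum_eq_nat' hval _ ω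
  have hPstep : ∀ k ω, P (k + 1) ω ≤ P k ω + 1 := by
    intro k ω
    have hsplit : univ.filter (fun t : Fin n => (t : ℕ) < k + 1) =
        univ.filter (fun t : Fin n => (t : ℕ) < k) ∪
          univ.filter (fun t : Fin n => (t : ℕ) = k) := by
      ext t; simp only [Finset.mem_filter, Finset.mem_union, Finset.mem_univ, true_and]; omega
    have hdisj : Disjoint (univ.filter (fun t : Fin n => (t : ℕ) < k))
        (univ.filter (fun t : Fin n => (t : ℕ) = k)) := by
      rw [Finset.disjoint_filter]
      intro t _ h1; omega
    rw [hPdef]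
    simp only
    rw [hsplit, Finset.sum_union hdisj]
    have hcard : (univ.filter (fun t : Fin n => (t : ℕ) = k)).card ≤ 1 := by
      apply Finset.card_le_one.2
      intro x hx y hy
      simp only [Finset.mem_filter] at hx hy
      exact Fin.ext (by omega)
    have hbound : ∑ t ∈ univ.filter (fun t : Fin n => (t : ℕ) = k), X t ω ≤ 1 := by
      calc ∑ t ∈ univ.filter (fun t : Fin n => (t : ℕ) = k), X t ω
          ≤ (univ.filter (fun t : Fin n => (t : ℕ) = k)).card • (1 : ℝ) :=
            Finset.sum_le_card_nsmul _ _ 1 (fun t _ => by rcases hval t ω with h | h <;> simp [h])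
        _ ≤ 1 := by
            simp only [nsmul_eq_mul, mul_one]
            exact_mod_cast hcard
    linarith
  -- key integer bound: on the first hitting time, P k ≤ a
  set A : ℕ → Set Ω := fun k => {ω | (a : ℝ) ≤ P k ω ∧ P (k - 1) ω < a} with hAdef
  set B : ℕ → Set Ω := fun k => {ω | (a : ℝ) ≤ Q k ω} with hBdef
  have hAmeas : ∀ k, MeasurableSet (A k) := by
    intro k
    exact (measurableSet_le measurable_const (hPmeas k)).inter
      (measurableSet_lt (hPmeas (k - 1)) measurable_const)
  have hBmeas : ∀ k, MeasurableSet (B k) := fun k =>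
    measurableSet_le measurable_const (hQmeas k)
  -- covering
  have hcover : {ω | ((2 * a : ℕ) : ℝ) ≤ S ω} ⊆ ⋃ k ∈ Finset.range (n + 1), A k ∩ B k := by
    intro ω hω
    simp only [Set.mem_setOf_eq] at hω
    have hex : ∃ k, (a : ℝ) ≤ P k ω := by
      refine ⟨n, ?_⟩
      rw [hPn]
      push_cast at hω
      nlinarith [ha]
    set k := Nat.find hex with hk
    have hk1 : (a : ℝ) ≤ P k ω := Nat.find_spec hex
    have hkpos : 1 ≤ k := by
      by_contra h
      push_neg at h
      interval_cases k
      rw [hP0] at hk1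
      have : (1 : ℝ) ≤ a := by exact_mod_cast ha
      linarith
    have hkmin : P (k - 1) ω < a := by
      by_contra h
      push_neg at h
      exact Nat.find_min hex (by omega) h
    have hkn : k ≤ n := by
      by_contra h
      push_neg at h
      have := hPmono n (k - 1) (by omega) ω
      rw [hPn] at this
      push_cast at hω
      nlinarith [ha, hkmin]
    have hPka : P k ω ≤ a := by
      obtain ⟨m, hm⟩ := hPnat k ω
      obtain ⟨m', hm'⟩ := hPnat (k - 1) ω
      have h1 : P k ω ≤ P (k - 1) ω + 1 := by
        have := hPstep (k - 1) ω
        rwa [Nat.sub_add_cancel hkpos] at this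
      rw [hm, hm'] at h1
      rw [hm'] at hkmin
      rw [hm]
      have hma : m' < a := by exact_mod_cast hkmin
      have hmm : m ≤ m' + 1 := by exact_mod_cast h1
      have : m ≤ a := by omega
      exact_mod_cast this
    refine Set.mem_biUnion (Finset.mem_range.2 (by omega) : k ∈ Finset.range (n + 1)) ?_
    refine ⟨⟨hk1, hkmin⟩, ?_⟩
    simp only [hBdef, Set.mem_setOf_eq]
    have := hPQ k ω
    push_cast at hω
    linarith
  -- disjointness of the A k
  have hAdisj0 : ∀ k k', k < k' → Disjoint (A k) (A k') := by
    intro k k' h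
    apply Set.disjoint_left.2
    intro ω hωk hωk'
    have h1 : (a : ℝ) ≤ P k ω := hωk.1
    have h2 : P (k' - 1) ω < a := hωk'.2
    have := hPmono k (k' - 1) (by omega) ω
    linarith
  have hAdisj : (Finset.range (n + 1) : Set ℕ).PairwiseDisjoint A := by
    intro k _ k' _ hkk'
    rcases lt_or_gt_of_ne hkk' with h | h
    · exact hAdisj0 k k' h
    · exact (hAdisj0 k' k h).symm
  -- independence: μ (A k ∩ B k) = μ (A k) * μ (B k)
  have hindepAB : ∀ k, μ (A k ∩ B k) = μ (A k) * μ (B k) := by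
    intro k
    set s : Finset (Fin n) := univ.filter (fun t : Fin n => (t : ℕ) < k) with hs
    set t' : Finset (Fin n) := univ.filter (fun t : Fin n => k ≤ (t : ℕ)) with ht'
    have hst : Disjoint s t' := by
      rw [Finset.disjoint_filter]
      intro t _ h1; omega
    have hIF := hindep.indepFun_finset s t' hst hmeas
    set f1 : (s → ℝ) → ℝ := fun y => ∑ i, y i with hf1
    set f2 : (s → ℝ) → ℝ := fun y => ∑ i ∈ univ.filter (fun i : s => ((i : Fin n) : ℕ) < k - 1), y i with hf2
    set g1 : (t' → ℝ) → ℝ := fun y => ∑ i, y i with hg1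
    have hf1m : Measurable f1 := Finset.measurable_sum _ fun i _ => measurable_pi_apply i
    have hf2m : Measurable f2 := Finset.measurable_sum _ fun i _ => measurable_pi_apply i
    have hg1m : Measurable g1 := Finset.measurable_sum _ fun i _ => measurable_pi_apply i
    set C : Set (s → ℝ) := {y | (a : ℝ) ≤ f1 y ∧ f2 y < a} with hC
    set D : Set (t' → ℝ) := {y | (a : ℝ) ≤ g1 y} with hD
    have hCm : MeasurableSet C :=
      (measurableSet_le measurable_const hf1m).inter (measurableSet_lt hf2m measurable_const)
    have hDm : MeasurableSet D := measurableSet_le measurable_const hg1m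
    have hApre : A k = (fun ω (i : s) => X i ω) ⁻¹' C := by
      ext ω
      simp only [hAdef, hC, Set.mem_preimage, Set.mem_setOf_eq, hf1, hf2]
      have e1 : ∑ i : s, X i ω = P k ω := by
        rw [hPdef]; exact Finset.sum_coe_sort s (fun t => X t ω)
      have e2 : ∑ i ∈ univ.filter (fun i : s => ((i : Fin n) : ℕ) < k - 1), X (i : Fin n) ω
          = P (k - 1) ω := by
        simp only [hPdef]
        rw [Finset.sum_filter]
        rw [Finset.sum_coe_sort s (fun t => if (t : ℕ) < k - 1 then X t ω else 0)]
        rw [← Finset.sum_filter]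
        apply Finset.sum_congr _ (fun _ _ => rfl)
        ext t
        simp only [hs, Finset.mem_filter, Finset.mem_univ, true_and]
        omega
      rw [e1, e2]
    have hBpre : B k = (fun ω (i : t') => X i ω) ⁻¹' D := by
      ext ω
      simp only [hBdef, hD, Set.mem_preimage, Set.mem_setOf_eq, hg1]
      have e1 : ∑ i : t', X i ω = Q k ω := by
        rw [hQdef]; exact Finset.sum_coe_sort t' (fun t => X t ω)
      rw [e1]
    rw [hApre, hBpre]
    exact hIF.measure_inter_preimage_eq_mul C D hCm hDm
  -- A k ⊆ {a ≤ S}, B k ⊆ {a ≤ S}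
  have hAsub : ∀ k, A k ⊆ {ω | (a : ℝ) ≤ S ω} := by
    intro k ω hω
    exact le_trans hω.1 (hPS k ω)
  have hBsub : ∀ k, B k ⊆ {ω | (a : ℝ) ≤ S ω} := by
    intro k ω hω
    exact le_trans hω (hQS k ω)
  -- put it together
  calc μ {ω | ((2 * a : ℕ) : ℝ) ≤ S ω}
      ≤ μ (⋃ k ∈ Finset.range (n + 1), A k ∩ B k) := measure_mono hcover
    _ ≤ ∑ k ∈ Finset.range (n + 1), μ (A k ∩ B k) := measure_biUnion_finset_le _ _
    _ = ∑ k ∈ Finset.range (n + 1), μ (A k) * μ (B k) := by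
        exact Finset.sum_congr rfl fun k _ => hindepAB k
    _ ≤ ∑ k ∈ Finset.range (n + 1), μ (A k) * μ {ω | (a : ℝ) ≤ S ω} := by
        exact Finset.sum_le_sum fun k _ => mul_le_mul_right (measure_mono (hBsub k)) _
    _ = (∑ k ∈ Finset.range (n + 1), μ (A k)) * μ {ω | (a : ℝ) ≤ S ω} := by
        rw [Finset.sum_mul]
    _ = μ (⋃ k ∈ Finset.range (n + 1), A k) * μ {ω | (a : ℝ) ≤ S ω} := by
        rw [measure_biUnion_finset hAdisj fun k _ => hAmeas k]
    _ ≤ μ {ω | (a : ℝ) ≤ S ω} * μ {ω | (a : ℝ) ≤ S ω} := by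
        apply mul_le_mul_left
        apply measure_mono
        exact Set.iUnion₂_subset fun k _ => hAsub k

/-- Let `N` be the sum of `n` independent Bernoulli variables, and suppose `j ≥ 2`
satisfies `Pr[N ≥ j] ≥ 1/2` and `Pr[N ≥ j+1] ≤ 1/2`. Then
`(1/j)·Σ_{i=1}^{j} Pr[N ≥ i] − Pr[N ≥ j+1] ≥ (⌊j/2⌋/j)·(√(1/2) − 1/2) ≥ 1/15`. -/
theorem stmt15 {Ω : Type*} [MeasurableSpace Ω] (μ : Measure Ω) [IsProbabilityMeasure μ]
    (n : ℕ) (X : Fin n → Ω → ℝ)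
    (hmeas : ∀ i, Measurable (X i))
    (hval : ∀ i ω, X i ω = 0 ∨ X i ω = 1)
    (hindep : iIndepFun X μ)
    (j : ℕ) (hj : 2 ≤ j)
    (hhalf : (1 : ℝ) / 2 ≤ (μ {ω | (j : ℝ) ≤ ∑ t, X t ω}).toReal)
    (hhalf' : (μ {ω | ((j : ℝ) + 1) ≤ ∑ t, X t ω}).toReal ≤ 1 / 2) :
    (1 / (j : ℝ)) *
        (∑ i ∈ Finset.Icc 1 j, (μ {ω | (i : ℝ) ≤ ∑ t, X t ω}).toReal) -
      (μ {ω | ((j : ℝ) + 1) ≤ ∑ t, X t ω}).toReal ≥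
      ((j / 2 : ℕ) : ℝ) / (j : ℝ) * (Real.sqrt (1 / 2) - 1 / 2) ∧
    ((j / 2 : ℕ) : ℝ) / (j : ℝ) * (Real.sqrt (1 / 2) - 1 / 2) ≥ 1 / 15 := by
  classical
  set a : ℕ := j / 2 with hadef
  have ha1 : 1 ≤ a := by omega
  have h2a : 2 * a ≤ j := by omega
  have h3a : j ≤ 3 * a := by omega
  set s : ℝ := Real.sqrt (1 / 2) with hsdef
  have hs2 : s ^ 2 = 1 / 2 := Real.sq_sqrt (by norm_num)
  have hsnn : 0 ≤ s := Real.sqrt_nonneg _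
  have hs07 : (7 : ℝ) / 10 ≤ s := by nlinarith
  have hjr : (0 : ℝ) < (j : ℝ) := by positivity -- wrong if j=0 but j ≥ 2
  -- monotonicity of tail probabilities
  have hmono : ∀ (c c' : ℝ), c ≤ c' →
      (μ {ω | c' ≤ ∑ t, X t ω}).toReal ≤ (μ {ω | c ≤ ∑ t, X t ω}).toReal := by
    intro c c' hcc
    exact ENNReal.toReal_mono (measure_ne_top μ _)
      (measure_mono fun ω hω => le_trans hcc hω)
  -- sqrt lower bound on p a
  have hsq : 1 / 2 ≤ (μ {ω | (a : ℝ) ≤ ∑ t, X t ω}).toReal *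
      (μ {ω | (a : ℝ) ≤ ∑ t, X t ω}).toReal := by
    have h1 : μ {ω | (j : ℝ) ≤ ∑ t, X t ω} ≤ μ {ω | ((2 * a : ℕ) : ℝ) ≤ ∑ t, X t ω} := by
      apply measure_mono
      intro ω hω
      simp only [Set.mem_setOf_eq] at hω ⊢
      refine le_trans ?_ hω
      exact_mod_cast h2a
    have h2 := submul' μ hmeas hval hindep a ha1
    have h3 := le_trans h1 h2
    have h4 := ENNReal.toReal_mono
      (ENNReal.mul_ne_top (measure_ne_top μ _) (measure_ne_top μ _)) h3
    rw [ENNReal.toReal_mul] at h4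
    linarith
  have hpa : s ≤ (μ {ω | (a : ℝ) ≤ ∑ t, X t ω}).toReal := by
    have h5 := Real.sqrt_le_sqrt hsq
    rwa [Real.sqrt_mul_self ENNReal.toReal_nonneg] at h5
  -- splitting the sum
  have hsplit : Finset.Icc 1 j = Finset.Ioc 0 a ∪ Finset.Ioc a j := by
    ext x
    simp only [Finset.mem_Icc, Finset.mem_Ioc, Finset.mem_union]
    omega
  have hdisj : Disjoint (Finset.Ioc 0 a) (Finset.Ioc a j) := by
    rw [Finset.disjoint_left]
    intro x hx hx'
    simp only [Finset.mem_Ioc] at hx hx'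
    omega
  have hlow1 : ∀ i ∈ Finset.Ioc 0 a, s ≤ (μ {ω | (i : ℝ) ≤ ∑ t, X t ω}).toReal := by
    intro i hi
    simp only [Finset.mem_Ioc] at hi
    exact le_trans hpa (hmono _ _ (by exact_mod_cast hi.2))
  have hlow2 : ∀ i ∈ Finset.Ioc a j, (1 : ℝ) / 2 ≤ (μ {ω | (i : ℝ) ≤ ∑ t, X t ω}).toReal := by
    intro i hi
    simp only [Finset.mem_Ioc] at hi
    exact le_trans hhalf (hmono _ _ (by exact_mod_cast hi.2))
  have hS1 : (a : ℝ) * s ≤ ∑ i ∈ Finset.Ioc 0 a, (μ {ω | (i : ℝ) ≤ ∑ t, X t ω}).toReal := by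
    have := Finset.card_nsmul_le_sum (Finset.Ioc 0 a)
      (fun i => (μ {ω | (i : ℝ) ≤ ∑ t, X t ω}).toReal) s hlow1
    simpa [nsmul_eq_mul, Nat.card_Ioc] using this
  have hS2 : ((j : ℝ) - a) * (1 / 2) ≤
      ∑ i ∈ Finset.Ioc a j, (μ {ω | (i : ℝ) ≤ ∑ t, X t ω}).toReal := by
    have := Finset.card_nsmul_le_sum (Finset.Ioc a j)
      (fun i => (μ {ω | (i : ℝ) ≤ ∑ t, X t ω}).toReal) (1 / 2) hlow2
    have hc : ((Finset.Ioc a j).card : ℝ) = (j : ℝ) - a := by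
      rw [Nat.card_Ioc]
      push_cast [Nat.cast_sub (by omega : a ≤ j)]
      ring
    calc ((j : ℝ) - a) * (1 / 2) = ((Finset.Ioc a j).card : ℝ) * (1 / 2) := by rw [hc]
      _ ≤ _ := by simpa [nsmul_eq_mul] using this
  have hsum : (a : ℝ) * s + ((j : ℝ) - a) * (1 / 2) ≤
      ∑ i ∈ Finset.Icc 1 j, (μ {ω | (i : ℝ) ≤ ∑ t, X t ω}).toReal := by
    rw [hsplit, Finset.sum_union hdisj]
    exact add_le_add hS1 hS2
  have haj : (a : ℝ) ≤ (j : ℝ) := by exact_mod_cast (by omega : a ≤ j)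
  have h3ar : (j : ℝ) ≤ 3 * a := by exact_mod_cast h3a
  have har1 : (1 : ℝ) ≤ (a : ℝ) := by exact_mod_cast ha1
  constructor
  · have key : (a : ℝ) / (j : ℝ) * (s - 1 / 2) =
        (1 / (j : ℝ)) * ((a : ℝ) * s + ((j : ℝ) - a) * (1 / 2)) - 1 / 2 := by
      field_simp
      ring
    have hmul : (1 / (j : ℝ)) * ((a : ℝ) * s + ((j : ℝ) - a) * (1 / 2)) ≤
        (1 / (j : ℝ)) * ∑ i ∈ Finset.Icc 1 j, (μ {ω | (i : ℝ) ≤ ∑ t, X t ω}).toReal :=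
      mul_le_mul_of_nonneg_left hsum (by positivity)
    rw [ge_iff_le, key]
    linarith
  · rw [ge_iff_le]
    have h13 : (1 : ℝ) / 3 ≤ (a : ℝ) / (j : ℝ) := by
      rw [div_le_div_iff₀ (by norm_num) hjr]
      linarith
    nlinarith
end
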